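/- For a real random variable w with finite second moment and any fixed real γ, (E[cos(w·γ/√D)])^D → e^{-γ²E[w²]/2} as the integer D → ∞. -/

import Mathlib

open MeasureTheory Real Filter

/-- `sin x / x → 1` as `x → 0` (within `{x ≠ 0}`). -/
lemma aux_sin_div : Tendsto (fun x : ℝ => Real.sin x / x) (nhdsWithin 0 {(0:ℝ)}ᶜ) (nhds 1) := by
  have h : HasDerivAt Real.sin 1 0 := by simpa using Real.hasDerivAt_sin 0
  have := (hasDerivAt_iff_tendsto_slope).1 h
  refine this.congr fun x => ?_
  simp [slope_def_field, div_eq_inv_mul]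

/-- If `D * (1 - c D) → a` then `(c D)^D → exp (-a)`. -/
lemma aux_pow (c : ℕ → ℝ) (a : ℝ)
    (h : Tendsto (fun D : ℕ => (D : ℝ) * (1 - c D)) atTop (nhds a)) :
    Tendsto (fun D : ℕ => (c D) ^ D) atTop (nhds (Real.exp (-a))) := by
  have hinv : Tendsto (fun D : ℕ => ((D : ℝ))⁻¹) atTop (nhds 0) :=
    tendsto_inv_atTop_zero.comp tendsto_natCast_atTop_atTop
  have hc1 : Tendsto c atTop (nhds 1) := by
    have h0 : Tendsto (fun D : ℕ => ((D : ℝ) * (1 - c D)) * ((D : ℝ))⁻¹) atTop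
        (nhds (a * 0)) := h.mul hinv
    rw [mul_zero] at h0
    have h1 : Tendsto (fun D : ℕ => 1 - c D) atTop (nhds 0) := by
      refine h0.congr' ?_
      filter_upwards [eventually_ge_atTop 1] with D hD
      have hD0 : (D : ℝ) ≠ 0 := by positivity
      field_simp
    have := (tendsto_const_nhds (x := (1:ℝ)) (f := atTop)).sub h1
    simpa using this
  have hcpos : ∀ᶠ D in atTop, (0 : ℝ) < c D :=
    hc1.eventually (eventually_gt_nhds one_pos)
  -- squeeze for D * log (c D)
  have hupper : Tendsto (fun D : ℕ => (D : ℝ) * (c D - 1)) atTop (nhds (-a)) := by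
    have := h.neg
    refine this.congr fun D => by ring
  have hlower : Tendsto (fun D : ℕ => (D : ℝ) * (1 - (c D)⁻¹)) atTop (nhds (-a)) := by
    have hdiv : Tendsto (fun D : ℕ => -((D : ℝ) * (1 - c D)) / c D) atTop
        (nhds (-a / 1)) := (h.neg).div hc1 one_ne_zero
    rw [div_one] at hdiv
    refine hdiv.congr' ?_
    filter_upwards [hcpos] with D hD
    have : c D ≠ 0 := ne_of_gt hD
    field_simp
    ring
  have hlog : Tendsto (fun D : ℕ => (D : ℝ) * Real.log (c D)) atTop (nhds (-a)) := by
    refine tendsto_of_tendsto_of_tendsto_of_le_of_le' hlower hupper ?_ ?_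
    · filter_upwards [hcpos] with D hD
      have h1 : Real.log (c D)⁻¹ ≤ (c D)⁻¹ - 1 :=
        Real.log_le_sub_one_of_pos (inv_pos.mpr hD)
      rw [Real.log_inv] at h1
      have h2 : 1 - (c D)⁻¹ ≤ Real.log (c D) := by linarith
      exact mul_le_mul_of_nonneg_left h2 (Nat.cast_nonneg D)
    · filter_upwards [hcpos] with D hD
      exact mul_le_mul_of_nonneg_left (Real.log_le_sub_one_of_pos hD) (Nat.cast_nonneg D)
  have hexp : Tendsto (fun D : ℕ => Real.exp ((D : ℝ) * Real.log (c D))) atTop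
      (nhds (Real.exp (-a))) := (Real.continuous_exp.tendsto _).comp hlog
  refine hexp.congr' ?_
  filter_upwards [hcpos] with D hD
  rw [Real.exp_nat_mul, Real.exp_log hD]

theorem expectation_cos_pow_tendsto {Ω : Type*} [MeasureSpace Ω]
    [IsProbabilityMeasure (volume : Measure Ω)] (w : Ω → ℝ) (hm : Measurable w)
    (h2 : Integrable (fun ω => (w ω) ^ 2)) (γ : ℝ) :
    Tendsto (fun D : ℕ => (∫ ω, Real.cos (w ω * (γ / Real.sqrt D))) ^ D)
      atTop (nhds (Real.exp (-γ ^ 2 * (∫ ω, (w ω) ^ 2) / 2))) := by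
  set I := ∫ ω, (w ω) ^ 2 with hI
  set a : ℝ := γ ^ 2 * I / 2 with ha
  -- pointwise limit of D * (1 - cos (w ω * (γ/√D)))
  have hpt : ∀ ω, Tendsto (fun D : ℕ => (D : ℝ) * (1 - Real.cos (w ω * (γ / Real.sqrt D))))
      atTop (nhds (γ ^ 2 * (w ω) ^ 2 / 2)) := by
    intro ω
    set cc : ℝ := w ω * γ with hcc
    have hgoal : γ ^ 2 * (w ω) ^ 2 / 2 = cc ^ 2 / 2 := by rw [hcc]; ring
    rw [hgoal]
    by_cases hc0 : cc = 0
    · have hz : ∀ D : ℕ, (D : ℝ) * (1 - Real.cos (w ω * (γ / Real.sqrt D))) = 0 := by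
        intro D
        rcases mul_eq_zero.1 hc0 with h | h
        · simp [h]
        · simp [h]
      rw [hc0]
      simp only [hz]
      simpa using tendsto_const_nhds
    · -- c ≠ 0 case
      have hsqrt : Tendsto (fun D : ℕ => Real.sqrt D) atTop atTop := by
        refine tendsto_atTop_atTop.2 fun b => ⟨⌈b ^ 2⌉₊, fun D hD => ?_⟩
        have h1 : b ^ 2 ≤ (D : ℝ) := le_trans (Nat.le_ceil _) (by exact_mod_cast hD)
        calc b ≤ |b| := le_abs_self b
        _ = Real.sqrt (b ^ 2) := (Real.sqrt_sq_eq_abs b).symm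
        _ ≤ Real.sqrt D := Real.sqrt_le_sqrt h1
      have hu0 : Tendsto (fun D : ℕ => cc / (2 * Real.sqrt D)) atTop (nhds 0) := by
        have := Tendsto.div_atTop (tendsto_const_nhds (x := cc) (f := atTop))
          (hsqrt.const_mul_atTop (by norm_num : (0:ℝ) < 2))
        exact this
      have hune : ∀ᶠ D : ℕ in atTop, cc / (2 * Real.sqrt D) ∈ ({(0:ℝ)}ᶜ : Set ℝ) := by
        filter_upwards [eventually_ge_atTop 1] with D hD
        have hD0 : (0:ℝ) < Real.sqrt D := Real.sqrt_pos.2 (by exact_mod_cast hD)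
        simp only [Set.mem_compl_iff, Set.mem_singleton_iff]
        exact div_ne_zero hc0 (by positivity)
      have hu : Tendsto (fun D : ℕ => cc / (2 * Real.sqrt D)) atTop
          (nhdsWithin 0 {(0:ℝ)}ᶜ) :=
        tendsto_nhdsWithin_of_tendsto_nhds_of_eventually_within _ hu0 hune
      have hratio : Tendsto (fun D : ℕ =>
          Real.sin (cc / (2 * Real.sqrt D)) / (cc / (2 * Real.sqrt D))) atTop (nhds 1) :=
        aux_sin_div.comp hu
      have hsq : Tendsto (fun D : ℕ => cc ^ 2 / 2 *
          ((Real.sin (cc / (2 * Real.sqrt D)) / (cc / (2 * Real.sqrt D))) ^ 2)) atTop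
          (nhds (cc ^ 2 / 2 * 1 ^ 2)) := (hratio.pow 2).const_mul _
      rw [one_pow, mul_one] at hsq
      refine hsq.congr' ?_
      filter_upwards [eventually_ge_atTop 1] with D hD
      have hDpos : (0:ℝ) < (D:ℝ) := by exact_mod_cast Nat.lt_of_lt_of_le Nat.zero_lt_one hD
      have hsD : (0:ℝ) < Real.sqrt D := Real.sqrt_pos.2 hDpos
      have hsDsq : Real.sqrt D * Real.sqrt D = (D : ℝ) :=
        Real.mul_self_sqrt (le_of_lt hDpos)
      have harg : w ω * (γ / Real.sqrt D) = cc / Real.sqrt D := by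
        rw [hcc]; field_simp
      rw [harg]
      have hhalf : cc / Real.sqrt D = 2 * (cc / (2 * Real.sqrt D)) := by
        field_simp
      rw [hhalf]
      have hsinsq := Real.sin_sq_eq_half_sub (cc / (2 * Real.sqrt D))
      -- 1 - cos (2u) = 2 sin u ^ 2
      have hkey : 1 - Real.cos (2 * (cc / (2 * Real.sqrt D))) =
          2 * Real.sin (cc / (2 * Real.sqrt D)) ^ 2 := by
        rw [hsinsq]; ring
      rw [hkey]
      have hune' : cc / (2 * Real.sqrt D) ≠ 0 := div_ne_zero hc0 (by positivity)
      have hsq2 : Real.sqrt D ^ 2 = (D : ℝ) := Real.sq_sqrt (le_of_lt hDpos)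
      field_simp
      ring_nf
      rw [hsq2]
      ring
  -- dominated convergence
  have hA : Tendsto (fun D : ℕ => ∫ ω, (D : ℝ) * (1 - Real.cos (w ω * (γ / Real.sqrt D))))
      atTop (nhds a) := by
    have ha' : a = ∫ ω, γ ^ 2 * (w ω) ^ 2 / 2 := by
      rw [ha, hI]
      rw [show (fun ω => γ ^ 2 * (w ω) ^ 2 / 2) = fun ω => (γ ^ 2 / 2) * (w ω) ^ 2 by
        funext ω; ring]
      rw [integral_const_mul]
      ring
    rw [ha']
    refine tendsto_integral_filter_of_dominated_convergence
      (fun ω => γ ^ 2 / 2 * (w ω) ^ 2) ?_ ?_ ?_ ?_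
    · filter_upwards with D
      exact ((measurable_const.mul ((hm.mul_const _).cos.const_sub 1))).aestronglyMeasurable
    · filter_upwards [eventually_ge_atTop 1] with D hD
      filter_upwards with ω
      have hDpos : (0:ℝ) < (D:ℝ) := by exact_mod_cast Nat.lt_of_lt_of_le Nat.zero_lt_one hD
      have h1 : 0 ≤ 1 - Real.cos (w ω * (γ / Real.sqrt D)) := by
        have := Real.cos_le_one (w ω * (γ / Real.sqrt D)); linarith
      have h2' : 1 - Real.cos (w ω * (γ / Real.sqrt D)) ≤
          (w ω * (γ / Real.sqrt D)) ^ 2 / 2 := by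
        have := Real.one_sub_sq_div_two_le_cos (x := w ω * (γ / Real.sqrt D)); linarith
      have hsDsq : Real.sqrt D ^ 2 = (D : ℝ) := Real.sq_sqrt (le_of_lt hDpos)
      have h3 : (D : ℝ) * ((w ω * (γ / Real.sqrt D)) ^ 2 / 2) = γ ^ 2 / 2 * (w ω) ^ 2 := by
        have hs0 : Real.sqrt D ≠ 0 := by positivity
        field_simp
        ring_nf
        rw [hsDsq]
        ring
      rw [Real.norm_eq_abs, abs_of_nonneg (by positivity : (0:ℝ) ≤ (D : ℝ) * _)]
      calc (D : ℝ) * (1 - Real.cos (w ω * (γ / Real.sqrt D)))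
          ≤ (D : ℝ) * ((w ω * (γ / Real.sqrt D)) ^ 2 / 2) :=
            mul_le_mul_of_nonneg_left h2' (le_of_lt hDpos)
        _ = γ ^ 2 / 2 * (w ω) ^ 2 := h3
    · exact h2.const_mul _
    · filter_upwards with ω
      exact hpt ω
  -- rewrite integral as D * (1 - ∫ cos)
  have hint : ∀ D : ℕ, Integrable (fun ω => Real.cos (w ω * (γ / Real.sqrt D))) := by
    intro D
    refine Integrable.mono' (integrable_const 1)
      ((hm.mul_const _).cos.aestronglyMeasurable) ?_
    filter_upwards with ω
    rw [Real.norm_eq_abs]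
    exact Real.abs_cos_le_one _
  have heq : ∀ D : ℕ, (∫ ω, (D : ℝ) * (1 - Real.cos (w ω * (γ / Real.sqrt D)))) =
      (D : ℝ) * (1 - ∫ ω, Real.cos (w ω * (γ / Real.sqrt D))) := by
    intro D
    rw [integral_const_mul, integral_sub (integrable_const 1) (hint D)]
    simp
  have hA' : Tendsto (fun D : ℕ =>
      (D : ℝ) * (1 - ∫ ω, Real.cos (w ω * (γ / Real.sqrt D)))) atTop (nhds a) := by
    refine hA.congr fun D => heq D
  have := aux_pow (fun D => ∫ ω, Real.cos (w ω * (γ / Real.sqrt D))) a hA'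
  have hfix : -a = -γ ^ 2 * I / 2 := by rw [ha]; ring
  rw [hfix] at this
  exact this
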